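/- arXiv:1811.05865 — 6 statements merged into one kernel-verified Lean document; each statement's English description precedes it below -/
import Mathlib

section
/- Let n ≥ 1 and let v_1, ..., v_k be finitely many nonzero vectors in ℂ^n. Then there exists an orthonormal basis (e_1, ..., e_n) of ℂ^n (with respect to the standard Hermitian inner product) such that for every i ∈ {1, ..., n} and every j ∈ {1, ..., k} one has ⟨v_j, e_i⟩ ≠ 0; equivalently, every basis vector e_i lies outside the union of the hyperplanes H_{v_j} = {z ∈ ℂ^n : ⟨v_j, z⟩ = 0}. -/
open Finset
open scoped ComplexOrder

noncomputable section

/-- The `k`-th elementary symmetric polynomial of a finite family of reals. -/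
def esymmFin {N : ℕ} (k : ℕ) (lam : Fin N → ℝ) : ℝ :=
  ∑ s ∈ Finset.univ.powersetCard k, ∏ i ∈ s, lam i

/-- A square complex matrix is `m`-positive if it is Hermitian and the `k`-th elementary
symmetric function of its eigenvalues is positive for every `1 ≤ k ≤ m`. -/
def MPositive {d : ℕ} (m : ℕ) (M : Matrix (Fin d) (Fin d) ℂ) : Prop :=
  ∃ hM : M.IsHermitian, ∀ k, 1 ≤ k → k ≤ m → 0 < esymmFin k hM.eigenvalues

/-- The matrix of the compression `P_H ∘ A|_H` of the Hermitian form of `A` to a subspace,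
computed in an orthonormal family `b` spanning it: the entries are `⟪b i, A (b j)⟫`. -/
def compressionMatrix {n d : ℕ} (A : Matrix (Fin n) (Fin n) ℂ)
    (b : Fin d → EuclideanSpace ℂ (Fin n)) : Matrix (Fin d) (Fin d) ℂ :=
  fun i j => inner ℂ (b i) (Matrix.toEuclideanLin A (b j))

/-- The compression of the Hermitian form of `A` to the subspace `H ⊆ ℂ^n` (the Hermitian
endomorphism `P_H ∘ A|_H` of `H`, `P_H` the orthogonal projection) is `m`-positive:
in every orthonormal basis of `H` its representing matrix is `m`-positive. -/
def CompressionMPositive {n : ℕ} (m : ℕ) (A : Matrix (Fin n) (Fin n) ℂ)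
    (H : Submodule ℂ (EuclideanSpace ℂ (Fin n))) : Prop :=
  ∀ (d : ℕ) (b : Fin d → EuclideanSpace ℂ (Fin n)), Orthonormal ℂ b →
    (∀ i, b i ∈ H) → Submodule.span ℂ (Set.range b) = H →
    MPositive m (compressionMatrix A b)

open Polynomial

private lemma exists_unit_avoiding (T : Finset ℂ) : ∃ z : ℂ, ‖z‖ = 1 ∧ z ∉ T := by
  have hinj : Set.InjOn (fun t : ℝ => Complex.exp (t * Complex.I)) (Set.Ioo 0 1) := by
    intro a ha b hb hab
    simp only at hab
    rw [Complex.exp_eq_exp_iff_exists_int] at hab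
    obtain ⟨m, hm⟩ := hab
    have hI : ((a : ℂ) - b - m * (2 * Real.pi)) * Complex.I = 0 := by
      rw [sub_mul, sub_mul, hm]; ring
    have h2 : ((a : ℝ) - b - m * (2 * Real.pi) : ℝ) = 0 := by
      have := mul_eq_zero.mp hI
      rcases this with h | h
      · exact_mod_cast by push_cast at h ⊢; exact_mod_cast h
      · exact absurd h Complex.I_ne_zero
    have hm0 : m = 0 := by
      by_contra h
      have h1 : (1:ℝ) ≤ |(m:ℝ)| := by exact_mod_cast Int.one_le_abs h
      obtain ⟨ha1, ha2⟩ := ha; obtain ⟨hb1, hb2⟩ := hb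
      rcases abs_cases (m:ℝ) with ⟨he, _⟩ | ⟨he, _⟩ <;>
        nlinarith [Real.pi_gt_three]
    rw [hm0] at h2
    push_cast at h2
    linarith
  have hinf : (Set.Ioo (0:ℝ) 1).Infinite := Set.Ioo_infinite (by norm_num)
  have himg : ((fun t : ℝ => Complex.exp (t * Complex.I)) '' Set.Ioo 0 1).Infinite :=
    hinf.image hinj
  obtain ⟨z, hz, hzT⟩ := himg.exists_notMem_finset T
  obtain ⟨t, _, rfl⟩ := hz
  refine ⟨_, ?_, hzT⟩
  rw [Complex.norm_exp]
  simp


/-- Lemma 2.2: given finitely many nonzero vectors `v₁, …, v_k` in `ℂ^n`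
(`n ≥ 1`), there is an orthonormal basis `e₁, …, e_n` of `ℂ^n` such that every `e_i` lies
outside every hyperplane `H_{v_j} = {z : ⟪v_j, z⟫ = 0}`, i.e. `⟪v_j, e_i⟫ ≠ 0` for all `i, j`. -/
theorem stmt0 (n k : ℕ) (hn : 1 ≤ n)
    (v : Fin k → EuclideanSpace ℂ (Fin n)) (hv : ∀ j, v j ≠ 0) :
    ∃ e : OrthonormalBasis (Fin n) ℂ (EuclideanSpace ℂ (Fin n)),
      ∀ (i : Fin n) (j : Fin k), inner ℂ (v j) (e i) ≠ (0 : ℂ) := by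
  have hn0 : n ≠ 0 := by omega
  set ω : ℂ := Complex.exp (2 * Real.pi * Complex.I / n) with hω
  have hprim : IsPrimitiveRoot ω n := Complex.isPrimitiveRoot_exp n hn0
  have hωn : ω ^ n = 1 := hprim.pow_eq_one
  have hω0 : ω ≠ 0 := hprim.ne_zero hn0
  have hωabs : ‖ω‖ = 1 := by
    rw [hω, Complex.norm_exp]
    norm_num [Complex.div_re]
  set q : Fin k → Fin n → Polynomial ℂ := fun j i =>
    ∑ l : Fin n, C ((starRingEnd ℂ) (v j l) * ω ^ ((i : ℕ) * l)) * X ^ (l : ℕ) with hqdef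
  have hq : ∀ j i, q j i ≠ 0 := by
    intro j i hzero
    obtain ⟨l₀, hl₀⟩ : ∃ l, v j l ≠ 0 := by
      by_contra h
      push_neg at h
      exact hv j (PiLp.ext (fun l => by simpa using h l))
    have hc : (q j i).coeff l₀ = (starRingEnd ℂ) (v j l₀) * ω ^ ((i : ℕ) * l₀) := by
      rw [hqdef]
      simp only [finset_sum_coeff, coeff_C_mul, coeff_X_pow]
      rw [Finset.sum_eq_single l₀]
      · simp
      · intro b _ hb
        have hne : ¬ ((l₀ : ℕ) = (b : ℕ)) := fun h => hb (Fin.val_injective h).symm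
        simp [hne]
      · simp
    rw [hzero] at hc
    simp only [coeff_zero] at hc
    rcases mul_eq_zero.mp hc.symm with h | h
    · exact hl₀ (by simpa using congrArg (starRingEnd ℂ) h)
    · exact pow_ne_zero _ hω0 h
  set P : Polynomial ℂ := ∏ j : Fin k, ∏ i : Fin n, q j i with hPdef
  have hP : P ≠ 0 := Finset.prod_ne_zero_iff.mpr fun j _ =>
    Finset.prod_ne_zero_iff.mpr fun i _ => hq j i
  obtain ⟨z, hz1, hzT⟩ := exists_unit_avoiding P.roots.toFinset
  have hz0 : z ≠ 0 := by
    intro h; rw [h] at hz1; simp at hz1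
  have hPz : P.eval z ≠ 0 := by
    intro h
    exact hzT (Multiset.mem_toFinset.mpr ((mem_roots hP).mpr h))
  have hqz : ∀ j i, (q j i).eval z ≠ 0 := by
    intro j i
    have hsplit : P.eval z = ∏ j : Fin k, ∏ i : Fin n, (q j i).eval z := by
      rw [hPdef]; simp [eval_prod]
    rw [hsplit] at hPz
    exact Finset.prod_ne_zero_iff.mp (Finset.prod_ne_zero_iff.mp hPz j (mem_univ j)) i (mem_univ i)
  set c : ℂ := ((Real.sqrt n : ℝ) : ℂ)⁻¹ with hc
  have hcconj : (starRingEnd ℂ) c = c := by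
    rw [hc, map_inv₀, Complex.conj_ofReal]
  have hc2 : c * c = (n : ℂ)⁻¹ := by
    rw [hc, ← mul_inv, ← Complex.ofReal_mul, Real.mul_self_sqrt (Nat.cast_nonneg n)]
    norm_num
  have hc0 : c ≠ 0 := by
    rw [hc]
    simp only [ne_eq, inv_eq_zero, Complex.ofReal_eq_zero]
    rw [← ne_eq, Real.sqrt_ne_zero']
    exact_mod_cast Nat.pos_of_ne_zero hn0
  set w : Fin n → ℂ := fun i => z * ω ^ (i : ℕ) with hwdef
  have hwabs : ∀ i, ‖w i‖ = 1 := by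
    intro i
    rw [hwdef]
    simp [map_mul, map_pow, hz1, hωabs]
  have hw0 : ∀ i, w i ≠ 0 := fun i h => by
    have := hwabs i; rw [h] at this; simp at this
  have hwconj : ∀ i, (starRingEnd ℂ) (w i) = (w i)⁻¹ :=
    fun i => (Complex.inv_eq_conj (by exact hwabs i)).symm
  set b : Fin n → EuclideanSpace ℂ (Fin n) := fun i => WithLp.toLp 2 (fun l => c * (w i) ^ (l : ℕ)) with hbdef
  have hinner : ∀ i j, (inner ℂ (b i) (b j) : ℂ) = (n : ℂ)⁻¹ * ∑ l ∈ Finset.range n, ((w i)⁻¹ * w j) ^ l := by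
    intro i j
    rw [PiLp.inner_apply]
    simp only [RCLike.inner_apply', hbdef]
    rw [← Fin.sum_univ_eq_sum_range (fun l => ((w i)⁻¹ * w j) ^ l) n, Finset.mul_sum]
    congr 1
    funext l
    calc (starRingEnd ℂ) (c * w i ^ (l : ℕ)) * (c * w j ^ (l : ℕ))
        = (c * c) * (((w i)⁻¹ * w j) ^ (l : ℕ)) := by
          rw [map_mul, hcconj, map_pow, hwconj, mul_pow]; ring
      _ = (n : ℂ)⁻¹ * ((w i)⁻¹ * w j) ^ (l : ℕ) := by rw [hc2]
  have horth : Orthonormal ℂ b := by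
    rw [orthonormal_iff_ite]
    intro i j
    rw [hinner]
    by_cases hij : i = j
    · subst hij
      simp only [inv_mul_cancel₀ (hw0 i), one_pow, Finset.sum_const, Finset.card_range,
        nsmul_eq_mul, mul_one, if_pos rfl]
      exact inv_mul_cancel₀ (by exact_mod_cast hn0)
    · rw [if_neg hij]
      have hζ : (w i)⁻¹ * w j = ω ^ ((j : ℤ) - (i : ℤ)) := by
        rw [zpow_sub₀ hω0, zpow_natCast, zpow_natCast, hwdef]
        simp only [mul_inv]
        field_simp
      have hζn : ((w i)⁻¹ * w j) ^ n = 1 := by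
        rw [hζ, ← zpow_natCast, ← zpow_mul, mul_comm ((j:ℤ) - i), zpow_mul, zpow_natCast, hωn, one_zpow]
      have hζ1 : (w i)⁻¹ * w j ≠ 1 := by
        rw [hζ]
        intro h
        obtain ⟨m, hm⟩ := (hprim.zpow_eq_one_iff_dvd _).mp h
        have hjn : (j : ℤ) < n := by exact_mod_cast j.isLt
        have hin : (i : ℤ) < n := by exact_mod_cast i.isLt
        have hj0 : (0 : ℤ) ≤ j := by positivity
        have hi0 : (0 : ℤ) ≤ i := by positivity
        have hne : (j : ℤ) - i ≠ 0 := by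
          intro h0
          apply hij
          exact Fin.ext (by omega)
        have hd : (n : ℤ) ∣ |(j : ℤ) - i| := (dvd_abs _ _).mpr ⟨m, hm⟩
        have := Int.le_of_dvd (abs_pos.mpr hne) hd
        rcases abs_cases ((j : ℤ) - i) with ⟨he, _⟩ | ⟨he, _⟩ <;> omega
      rw [geom_sum_eq hζ1, hζn]
      simp
  have hcard : Fintype.card (Fin n) = Module.finrank ℂ (EuclideanSpace ℂ (Fin n)) := by
    simp
  have : Nonempty (Fin n) := ⟨⟨0, by omega⟩⟩
  set B := basisOfLinearIndependentOfCardEqFinrank horth.linearIndependent hcard with hB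
  have hBcoe : ⇑B = b := coe_basisOfLinearIndependentOfCardEqFinrank _ _
  refine ⟨B.toOrthonormalBasis (by rwa [hBcoe]), ?_⟩
  intro i j
  rw [Module.Basis.coe_toOrthonormalBasis, hBcoe]
  rw [PiLp.inner_apply]
  simp only [RCLike.inner_apply', hbdef]
  have heval : (q j i).eval z = ∑ l : Fin n, (starRingEnd ℂ) (v j l) * ω ^ ((i : ℕ) * l) * z ^ (l : ℕ) := by
    rw [hqdef]
    simp [eval_finset_sum]
  have hkey : (∑ l : Fin n, (starRingEnd ℂ) (v j l) * (c * (w i) ^ (l : ℕ))) = c * (q j i).eval z := by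
    rw [heval, Finset.mul_sum]
    congr 1
    funext l
    rw [hwdef]
    simp only [mul_pow, ← pow_mul]
    ring
  rw [hkey]
  exact mul_ne_zero hc0 (hqz j i)
end
end

section
/- Let 1 ≤ m ≤ n−1 and let A be an n×n Hermitian matrix that is m-positive and positive semidefinite. Then there exists a proper complex linear subspace S ⊊ ℂ^n such that for every v ∈ ℂ^n \ S, the compression of A to the hyperplane v^⊥ = {z ∈ ℂ^n : ⟨v, z⟩ = 0} satisfies e_m(eigenvalues of the compression) > 0; consequently, this compression is m-positive as a Hermitian endomorphism of v^⊥. -/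
open Finset
open scoped ComplexOrder

noncomputable section

lemma esymm_pos_of_rank {d k : ℕ} {D : Matrix (Fin d) (Fin d) ℂ} (hD : D.PosSemidef)
    (hk : k ≤ D.rank) : 0 < esymmFin k hD.1.eigenvalues := by
  classical
  set lam := hD.1.eigenvalues with hlam
  have hnn : ∀ i, 0 ≤ lam i := fun i => hD.eigenvalues_nonneg i
  have hcard : D.rank = (univ.filter fun i => lam i ≠ 0).card := by
    rw [hD.1.rank_eq_card_non_zero_eigs]
    exact Fintype.card_subtype _
  rw [hcard] at hk
  obtain ⟨s, hs_sub, hs_card⟩ := Finset.exists_subset_card_eq hk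
  apply Finset.sum_pos'
  · intro t _
    exact Finset.prod_nonneg fun i _ => hnn i
  · refine ⟨s, Finset.mem_powersetCard_univ.mpr hs_card, ?_⟩
    apply Finset.prod_pos
    intro i hi
    exact lt_of_le_of_ne (hnn i) (Ne.symm (Finset.mem_filter.mp (hs_sub hi)).2)

lemma rank_ge_of_esymm_pos {d m : ℕ} {D : Matrix (Fin d) (Fin d) ℂ} (hD : D.IsHermitian)
    (h : 0 < esymmFin m hD.eigenvalues) : m ≤ D.rank := by
  classical
  by_contra h'
  push_neg at h'
  have hcard : D.rank = (univ.filter fun i => hD.eigenvalues i ≠ 0).card := by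
    rw [hD.rank_eq_card_non_zero_eigs]
    exact Fintype.card_subtype _
  have : esymmFin m hD.eigenvalues = 0 := by
    apply Finset.sum_eq_zero
    intro s hs
    have hs_card : s.card = m := Finset.mem_powersetCard_univ.mp hs
    have : ¬ (s ⊆ univ.filter fun i => hD.eigenvalues i ≠ 0) := by
      intro hsub
      have := Finset.card_le_card hsub
      omega
    obtain ⟨i, hi, hi0⟩ := Finset.not_subset.mp this
    have : hD.eigenvalues i = 0 := by
      by_contra hne
      exact hi0 (Finset.mem_filter.mpr ⟨Finset.mem_univ _, hne⟩)
    exact Finset.prod_eq_zero hi this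
  rw [this] at h
  exact lt_irrefl _ h

/-- Lemma 2.1, second assertion: if `1 ≤ m ≤ n - 1` and the Hermitian matrix
`A` is `m`-positive and positive semidefinite, then there is a proper complex linear subspace
`S ⊊ ℂ^n` such that for every `v ∉ S` the compression of `A` to the hyperplane
`v^⊥ = {z : ⟪v, z⟫ = 0}` is `m`-positive (in particular `e_m` of its eigenvalues is `> 0`). -/
theorem stmt2 (n m : ℕ) (hm : 1 ≤ m) (hmn : m < n)
    (A : Matrix (Fin n) (Fin n) ℂ) (hpsd : A.PosSemidef) (hA : MPositive m A) :
    ∃ S : Submodule ℂ (EuclideanSpace ℂ (Fin n)), S ≠ ⊤ ∧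
      ∀ v : EuclideanSpace ℂ (Fin n), v ∉ S →
        CompressionMPositive m A (ℂ ∙ v)ᗮ := by
  classical
  obtain ⟨R, hRherm, hRR⟩ : ∃ R : Matrix (Fin n) (Fin n) ℂ, R.IsHermitian ∧ R * R = A :=
    by
      letI : PartialOrder (Matrix (Fin n) (Fin n) ℂ) := Matrix.instPartialOrder
      letI : NonnegSpectrumClass ℝ (Matrix (Fin n) (Fin n) ℂ) := Matrix.instNonnegSpectrumClass
      obtain ⟨X, hX, -, hXX⟩ := CFC.exists_sqrt_of_isSelfAdjoint_of_quasispectrumRestricts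
        hpsd.isHermitian (QuasispectrumRestricts.nnreal_of_nonneg hpsd.nonneg)
      exact ⟨X, hX, hXX⟩
  set T := Matrix.toEuclideanLin R with hTdef
  set K := LinearMap.ker T with hKdef
  have hTsymm : (T : EuclideanSpace ℂ (Fin n) →ₗ[ℂ] _).IsSymmetric :=
    Matrix.isHermitian_iff_isSymmetric.mp hRherm
  have hfinE : Module.finrank ℂ (EuclideanSpace ℂ (Fin n)) = n := finrank_euclideanSpace_fin
  -- rank A ≥ m
  have hrankA : m ≤ A.rank := by
    obtain ⟨hAh, hAe⟩ := hA
    exact rank_ge_of_esymm_pos hAh (hAe m hm le_rfl)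
  -- rank R = rank A
  have hrankR : A.rank = R.rank := by
    rw [← hRR, ← Matrix.rank_conjTranspose_mul_self R, hRherm]
  refine ⟨if h : K = ⊥ then ⊥ else Kᗮ, ?_, ?_⟩
  · split_ifs with h
    · intro hcontra
      have h0 : Module.finrank ℂ (⊥ : Submodule ℂ (EuclideanSpace ℂ (Fin n))) = 0 :=
        finrank_bot ℂ _
      rw [hcontra, finrank_top, hfinE] at h0
      omega
    · intro hcontra
      apply h
      rw [← Submodule.orthogonal_orthogonal K, hcontra, Submodule.top_orthogonal_eq_bot]
  · intro v hv d b _horth _hmem hspan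
    -- the key rank bound
    have hrankH : m ≤ Module.finrank ℂ (Submodule.map T ((ℂ ∙ v)ᗮ)) := by
      by_cases h : K = ⊥
      · rw [dif_pos h] at hv
        have hv0 : v ≠ 0 := fun h0 => hv (h0 ▸ Submodule.zero_mem ⊥)
        have hinj : Function.Injective T := LinearMap.ker_eq_bot.mp h
        have heq := (Submodule.equivMapOfInjective T hinj ((ℂ ∙ v)ᗮ)).finrank_eq
        rw [← heq]
        have h1 : Module.finrank ℂ (ℂ ∙ v) = 1 := finrank_span_singleton hv0
        have h2 := Submodule.finrank_add_finrank_orthogonal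
          (K := (ℂ ∙ v : Submodule ℂ (EuclideanSpace ℂ (Fin n))))
        rw [h1, hfinE] at h2
        omega
      · rw [dif_neg h] at hv
        obtain ⟨u, huK, huv⟩ : ∃ u ∈ K, (inner ℂ u v : ℂ) ≠ 0 := by
          by_contra hctr; push_neg at hctr
          exact hv ((Submodule.mem_orthogonal K v).mpr hctr)
        have hvu : (inner ℂ v u : ℂ) ≠ 0 := fun hc => huv (by
          rw [← inner_conj_symm, hc, map_zero])
        have hTu : T u = 0 := LinearMap.mem_ker.mp huK
        have hsup : (ℂ ∙ v)ᗮ ⊔ (ℂ ∙ u) = ⊤ := by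
          rw [eq_top_iff]
          intro x _
          have hx1 : x - ((inner ℂ v x : ℂ) / (inner ℂ v u : ℂ)) • u ∈ (ℂ ∙ v)ᗮ := by
            rw [Submodule.mem_orthogonal_singleton_iff_inner_right, inner_sub_right,
              inner_smul_right, div_mul_cancel₀ _ hvu, sub_self]
          have hx2 : ((inner ℂ v x : ℂ) / (inner ℂ v u : ℂ)) • u ∈ (ℂ ∙ u) :=
            Submodule.smul_mem _ _ (Submodule.mem_span_singleton_self u)
          have hxeq : x = (x - ((inner ℂ v x : ℂ) / (inner ℂ v u : ℂ)) • u)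
              + ((inner ℂ v x : ℂ) / (inner ℂ v u : ℂ)) • u := (sub_add_cancel _ _).symm
          rw [hxeq]
          exact Submodule.add_mem_sup hx1 hx2
        have hmap : Submodule.map T ((ℂ ∙ v)ᗮ) = LinearMap.range T := by
          rw [LinearMap.range_eq_map, ← hsup, Submodule.map_sup]
          have hbot : Submodule.map T (ℂ ∙ u) = ⊥ := by
            rw [Submodule.map_span]
            simp [hTu]
          rw [hbot, sup_bot_eq]
        have hfr : R.rank = Module.finrank ℂ (LinearMap.range T) := by
          rw [hTdef, Matrix.toEuclideanLin_eq_toLin]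
          exact Matrix.rank_eq_finrank_range_toLin R _ _
        rw [hmap, ← hfr, ← hrankR]
        exact hrankA
    -- identify the compression matrix as a Gram matrix
    set w : Fin d → EuclideanSpace ℂ (Fin n) := fun i => T (b i) with hwdef
    set B : Matrix (Fin n) (Fin d) ℂ := Matrix.of fun k i => w i k with hBdef
    have hC : compressionMatrix A b = B.conjTranspose * B := by
      ext i j
      have hAb : Matrix.toEuclideanLin A (b j) = T (T (b j)) := by
        rw [← hRR, hTdef, Matrix.toEuclideanLin_eq_toLin, Matrix.toLin_mul _ (PiLp.basisFun 2 ℂ (Fin n)) _]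
        rfl
      show inner ℂ (b i) (Matrix.toEuclideanLin A (b j)) = _
      rw [hAb, ← hTsymm (b i) (T (b j))]
      simp [Matrix.mul_apply, Matrix.conjTranspose_apply, PiLp.inner_apply, hBdef,
        RCLike.inner_apply, hwdef, mul_comm]
    have hCpsd : (compressionMatrix A b).PosSemidef := by
      rw [hC]; exact Matrix.posSemidef_conjTranspose_mul_self B
    -- rank of compression matrix
    have hrankC : m ≤ (compressionMatrix A b).rank := by
      rw [hC, Matrix.rank_conjTranspose_mul_self]
      set L := Matrix.toLin (Pi.basisFun ℂ (Fin d)) (PiLp.basisFun 2 ℂ (Fin n)) B with hLdef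
      have hBrank : B.rank = Module.finrank ℂ (LinearMap.range L) :=
        Matrix.rank_eq_finrank_range_toLin B _ _
      have hLb : ∀ j, L (Pi.basisFun ℂ (Fin d) j) = w j := by
        intro j
        rw [hLdef, Matrix.toLin_self]
        conv_rhs => rw [← (PiLp.basisFun 2 ℂ (Fin n)).sum_repr (w j)]
        rfl
      have hrange : LinearMap.range L = Submodule.map T ((ℂ ∙ v)ᗮ) := by
        rw [LinearMap.range_eq_map, ← (Pi.basisFun ℂ (Fin d)).span_eq, Submodule.map_span,
          ← Set.range_comp]
        have : L ∘ (Pi.basisFun ℂ (Fin d)) = w := funext hLb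
        rw [this, ← hspan, Submodule.map_span, ← Set.range_comp]
        rfl
      rw [hBrank, hrange]
      exact hrankH
    exact ⟨hCpsd.1, fun k hk1 hkm => esymm_pos_of_rank hCpsd (hkm.trans hrankC)⟩
end
end

section
/- Let 1 ≤ m ≤ n−1 and let A = diag(λ_1, ..., λ_n) be a real diagonal n×n matrix that is m-positive. Then for every vector e = (a_1, ..., a_n) with each a_i ∈ {+1, −1}, the compression of A to the hyperplane e^⊥ = {z ∈ ℂ^n : Σ_i a_i z_i = 0} is m-positive as a Hermitian endomorphism of e^⊥. -/
open Finset
open scoped ComplexOrder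

noncomputable section

section Aux
open Polynomial

namespace Stmt4Aux

/-- charmatrix of a diagonal matrix is diagonal. -/
lemma charmatrix_diagonal {d : ℕ} (w : Fin d → ℂ) :
    Matrix.charmatrix (Matrix.diagonal w)
      = Matrix.diagonal (fun i => (X : ℂ[X]) - C (w i)) := by
  ext i j
  by_cases h : i = j
  · subst h; simp
  · simp [Matrix.charmatrix_apply_ne _ _ _ h, Matrix.diagonal_apply_ne _ h]

lemma charpoly_diagonal {d : ℕ} (w : Fin d → ℂ) :
    (Matrix.diagonal w).charpoly = ∏ i, ((X : ℂ[X]) - C (w i)) := by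
  rw [Matrix.charpoly, charmatrix_diagonal, Matrix.det_diagonal]

lemma charmatrix_conj {d : ℕ} (U M : Matrix (Fin d) (Fin d) ℂ) (hU : star U * U = 1) :
    Matrix.charmatrix (star U * M * U)
      = (star U).map C * Matrix.charmatrix M * U.map C := by
  have hmap : (star U).map C * U.map C = (1 : Matrix (Fin d) (Fin d) ℂ[X]) := by
    rw [← Matrix.map_mul, hU, Matrix.map_one _ (map_zero C) (map_one C)]
  rw [Matrix.charmatrix, Matrix.charmatrix, mul_sub, sub_mul]
  congr 1
  · -- (star U).map C * scalar X * U.map C = scalar X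
    have hc := (Matrix.scalar_commute (n := Fin d) (X : ℂ[X])
      (fun r' => Commute.all _ _) ((star U).map C)).eq
    rw [← hc, mul_assoc, hmap, mul_one]
  · -- (star U).map C * M.map C * U.map C = (star U * M * U).map C
    simp only [RingHom.mapMatrix_apply]
    rw [← Matrix.map_mul, ← Matrix.map_mul]

lemma charpoly_conj {d : ℕ} (U M : Matrix (Fin d) (Fin d) ℂ) (hU : star U * U = 1) :
    (star U * M * U).charpoly = M.charpoly := by
  have hmap : (star U).map C * U.map C = (1 : Matrix (Fin d) (Fin d) ℂ[X]) := by
    rw [← Matrix.map_mul, hU, Matrix.map_one _ (map_zero C) (map_one C)]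
  have hdet : ((star U).map C).det * (U.map C).det = 1 := by
    rw [← Matrix.det_mul, hmap, Matrix.det_one]
  rw [Matrix.charpoly, Matrix.charpoly, charmatrix_conj U M hU,
    Matrix.det_mul, Matrix.det_mul]
  ring_nf
  rw [mul_comm, ← mul_assoc, mul_comm (Matrix.det (U.map C)), hdet, one_mul]

/-- Charpoly of a Hermitian matrix is the product of `X - eigenvalue`. -/
lemma hermitian_charpoly {d : ℕ} (M : Matrix (Fin d) (Fin d) ℂ) (hM : M.IsHermitian) :
    M.charpoly = ∏ i, ((X : ℂ[X]) - C (hM.eigenvalues i : ℂ)) := by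
  have hsp := hM.spectral_theorem
  set V := (hM.eigenvectorUnitary : Matrix (Fin d) (Fin d) ℂ) with hV
  have hVU : V * star V = 1 := Matrix.mem_unitaryGroup_iff.mp hM.eigenvectorUnitary.2
  have h1 : star (star V) * Matrix.diagonal (RCLike.ofReal ∘ hM.eigenvalues) * star V = M := by
    rw [star_star]; exact hsp.symm
  have h2 : star (star V) * (star V) = 1 := by rw [star_star]; exact hVU
  calc M.charpoly
      = (star (star V) * Matrix.diagonal (RCLike.ofReal ∘ hM.eigenvalues) * star V).charpoly := by
        rw [h1]
    _ = (Matrix.diagonal (RCLike.ofReal ∘ hM.eigenvalues)).charpoly := charpoly_conj _ _ h2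
    _ = ∏ i, ((X : ℂ[X]) - C (hM.eigenvalues i : ℂ)) := charpoly_diagonal _

lemma prod_X_sub_C_coeff_fin {N : ℕ} (w : Fin N → ℂ) {k : ℕ} (hk : k ≤ N) :
    (∏ i, ((X : ℂ[X]) - C (w i))).coeff (N - k) =
      (-1) ^ k * ∑ s ∈ Finset.univ.powersetCard k, ∏ i ∈ s, w i := by
  have hcard : Multiset.card (Finset.univ.val.map w) = N := by simp
  have h := Multiset.prod_X_sub_C_coeff (Finset.univ.val.map w)
    (k := N - k) (by rw [hcard]; omega)
  rw [hcard] at h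
  have h2 : N - (N - k) = k := by omega
  rw [h2, Multiset.map_map] at h
  have h3 : (∏ i, ((X : ℂ[X]) - C (w i)))
      = (Finset.univ.val.map ((fun t => (X : ℂ[X]) - C t) ∘ w)).prod := rfl
  rw [h3, h, Finset.esymm_map_val]

lemma derivative_prod_fin {N : ℕ} (f : Fin N → ℂ[X]) :
    derivative (∏ i, f i) = ∑ i, (∏ j ∈ Finset.univ.erase i, f j) * derivative (f i) := by
  have h1 : (∏ i, f i) = (Finset.univ.val.map f).prod := rfl
  rw [h1, Polynomial.derivative_prod]
  have h2 : ∀ i : Fin N, (Multiset.map f (Finset.univ.val.erase i)).prod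
      = ∏ j ∈ Finset.univ.erase i, f j := by
    intro i
    rw [← Finset.erase_val]
    rfl
  rw [show (∑ i, (∏ j ∈ Finset.univ.erase i, f j) * derivative (f i))
      = (Finset.univ.val.map (fun i => (∏ j ∈ Finset.univ.erase i, f j) * derivative (f i))).sum
    from rfl]
  refine congr_arg _ (Multiset.map_congr rfl (fun i _ => by rw [h2]))

lemma adjugate_last_last {d : ℕ} (M : Matrix (Fin (d+1)) (Fin (d+1)) ℂ[X]) :
    M.adjugate (Fin.last d) (Fin.last d)
      = (M.submatrix Fin.castSucc Fin.castSucc).det := by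
  rw [Matrix.adjugate_apply, Matrix.det_succ_row _ (Fin.last d)]
  rw [Finset.sum_eq_single (Fin.last d)]
  · simp only [Matrix.updateRow_self, Pi.single_eq_same, Fin.succAbove_last]
    have : ((M.updateRow (Fin.last d) (Pi.single (Fin.last d) 1)).submatrix
        Fin.castSucc Fin.castSucc) = M.submatrix Fin.castSucc Fin.castSucc := by
      ext i j
      simp [Matrix.updateRow_ne (Fin.castSucc_lt_last i).ne]
    rw [this]
    have : ((-1 : ℂ[X]) ^ ((Fin.last d : ℕ) + (Fin.last d : ℕ))) = 1 := by
      simp [Fin.last, Even.neg_one_pow ⟨d, rfl⟩]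
    rw [this, one_mul, one_mul]
  · intro j _ hj
    simp [Matrix.updateRow_self, Pi.single_eq_of_ne hj]
  · simp

lemma adjugate_of_unitary {d : ℕ} (U : Matrix (Fin d) (Fin d) ℂ) (hU : star U * U = 1) :
    U.adjugate = U.det • star U := by
  have hU' : U * star U = 1 := mul_eq_one_comm.mp hU
  calc U.adjugate = U.adjugate * (U * star U) := by rw [hU', mul_one]
    _ = (U.adjugate * U) * star U := by rw [mul_assoc]
    _ = (U.det • (1 : Matrix (Fin d) (Fin d) ℂ)) * star U := by rw [Matrix.adjugate_mul]
    _ = U.det • star U := by rw [Matrix.smul_mul, one_mul]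

end Stmt4Aux

namespace Stmt4Aux
lemma charmatrix_submatrix {d : ℕ} (N : Matrix (Fin (d+1)) (Fin (d+1)) ℂ) :
    (Matrix.charmatrix N).submatrix Fin.castSucc Fin.castSucc
      = Matrix.charmatrix (N.submatrix Fin.castSucc Fin.castSucc) := by
  ext i j
  by_cases h : i = j
  · subst h; simp
  · have h2 : (Fin.castSucc i) ≠ Fin.castSucc j := by
      simpa [Fin.castSucc_inj] using h
    simp [Matrix.charmatrix_apply_ne _ _ _ h, Matrix.charmatrix_apply_ne _ _ _ h2]
end Stmt4Aux


open Polynomial in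
lemma ofReal_esymmFin {N k : ℕ} (w : Fin N → ℝ) :
    ((esymmFin k w : ℝ) : ℂ) = ∑ s ∈ Finset.univ.powersetCard k, ∏ i ∈ s, (w i : ℂ) := by
  simp [esymmFin]

end Aux

open Polynomial Stmt4Aux Matrix

/-- Remark 2.3: if `A = diag(λ₁, …, λ_n)` is a real diagonal matrix which is
`m`-positive (`1 ≤ m ≤ n - 1`), then for every sign vector `a ∈ {±1}^n` the compression of `A`
to the hyperplane `{z : ∑ i, a i * z i = 0}` is `m`-positive. -/
theorem stmt4 (n m : ℕ) (hm : 1 ≤ m) (hmn : m < n)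
    (lam : Fin n → ℝ)
    (hpos : ∀ k, 1 ≤ k → k ≤ m → 0 < esymmFin k lam)
    (a : Fin n → ℝ) (ha : ∀ i, a i = 1 ∨ a i = -1) :
    CompressionMPositive m (Matrix.diagonal fun i => (lam i : ℂ))
      (ℂ ∙ ((EuclideanSpace.equiv (Fin n) ℂ).symm fun i => (a i : ℂ)))ᗮ := by
  intro d b hON hbmem hbspan
  set v : EuclideanSpace ℂ (Fin n) :=
    (EuclideanSpace.equiv (Fin n) ℂ).symm (fun i => (a i : ℂ)) with hv
  have hvcoord : ∀ i, v i = (a i : ℂ) := fun i => rfl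
  have ha1 : ∀ i, (a i) ^ 2 = 1 := by
    intro i; rcases ha i with h | h <;> rw [h] <;> ring
  have hane : ∀ i, (a i : ℂ) ≠ 0 := by
    intro i; rcases ha i with h | h <;> rw [h] <;> norm_num
  have hn0 : 0 < n := lt_of_le_of_lt (Nat.zero_le m) hmn
  have hvne : v ≠ 0 := by
    intro h
    have : v ⟨0, hn0⟩ = 0 := by rw [h]; rfl
    rw [hvcoord] at this
    exact hane _ this
  -- dimension count
  have hfr : Module.finrank ℂ (ℂ ∙ v)ᗮ = n - 1 := by
    have h1 : Module.finrank ℂ (ℂ ∙ v) = 1 := finrank_span_singleton hvne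
    have h2 := Submodule.finrank_add_finrank_orthogonal (K := ℂ ∙ v)
    rw [h1, finrank_euclideanSpace_fin] at h2
    omega
  have hd : d = n - 1 := by
    have hli := hON.linearIndependent
    have := finrank_span_eq_card hli
    rw [hbspan, hfr] at this
    simpa using this.symm
  have hn : n = d + 1 := by omega
  subst hn
  clear hfr hd
  -- the normalizing constant
  set c : ℝ := (Real.sqrt ((d : ℝ) + 1))⁻¹ with hc
  have hd1pos : (0:ℝ) < (d : ℝ) + 1 := by positivity
  have hc2 : c ^ 2 = ((d : ℝ) + 1)⁻¹ := by
    rw [hc, inv_pow, Real.sq_sqrt hd1pos.le]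
  -- the unit vector and the unitary matrix
  set u : Fin (d+1) → ℂ := fun i => ((c * a i : ℝ) : ℂ) with hu
  set g : Fin (d+1) → Fin (d+1) → ℂ := Fin.snoc (fun j k => b j k) u with hg
  set U : Matrix (Fin (d+1)) (Fin (d+1)) ℂ := Matrix.of (fun i j => g j i) with hUdef
  have hgc : ∀ (j : Fin d) (k : Fin (d+1)), g (Fin.castSucc j) k = b j k := by
    intro j k; rw [hg, Fin.snoc_castSucc]
  have hgl : ∀ k, g (Fin.last d) k = u k := by
    intro k; rw [hg, Fin.snoc_last]
  have hinner : ∀ x y : EuclideanSpace ℂ (Fin (d+1)),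
      (inner ℂ x y : ℂ) = ∑ k, (starRingEnd ℂ) (x k) * y k := by
    intro x y; simp [PiLp.inner_apply, RCLike.inner_apply, mul_comm]
  have horm : ∀ i j, (∑ k, (starRingEnd ℂ) (b i k) * b j k) = if i = j then 1 else 0 := by
    intro i j
    rw [← hinner]
    exact orthonormal_iff_ite.mp hON i j
  have hbv : ∀ i, (∑ k, (a k : ℂ) * b i k) = 0 := by
    intro i
    have h0 : (inner ℂ v (b i) : ℂ) = 0 :=
      (Submodule.mem_orthogonal _ _).mp (hbmem i) v (Submodule.mem_span_singleton_self v)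
    rw [hinner] at h0
    rw [← h0]
    refine Finset.sum_congr rfl fun k _ => ?_
    rw [hvcoord, Complex.conj_ofReal]
  have hcu : ∀ k, (starRingEnd ℂ) (u k) * u k = (((d : ℝ) + 1)⁻¹ : ℝ) := by
    intro k
    rw [hu]
    simp only [Complex.conj_ofReal]
    push_cast
    have h1 : (c:ℂ) * (a k) * ((c:ℂ) * (a k)) = ((c^2 * (a k)^2 : ℝ) : ℂ) := by
      push_cast; ring
    rw [h1, ha1 k, mul_one, hc2]
    push_cast
    ring
  -- unitarity
  have hUU : star U * U = 1 := by
    ext i j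
    rw [Matrix.mul_apply, Matrix.one_apply]
    have hentry : ∀ k, (star U) i k * U k j = (starRingEnd ℂ) (g i k) * g j k := by
      intro k
      rw [Matrix.star_apply, hUdef]
      rfl
    simp only [hentry]
    induction i using Fin.lastCases with
    | last =>
      induction j using Fin.lastCases with
      | last =>
        simp only [if_pos rfl]
        have : ∀ k, (starRingEnd ℂ) (g (Fin.last d) k) * g (Fin.last d) k
            = ((((d:ℝ)+1)⁻¹ : ℝ) : ℂ) := by
          intro k; simp only [hgl]; exact hcu k
        rw [Finset.sum_congr rfl (fun k _ => this k), Finset.sum_const]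
        simp only [Finset.card_univ, Fintype.card_fin, nsmul_eq_mul]
        push_cast
        field_simp
      | cast j =>
        rw [if_neg (by exact (Fin.castSucc_lt_last j).ne')]
        have : ∀ k, (starRingEnd ℂ) (g (Fin.last d) k) * g (Fin.castSucc j) k
            = (c:ℂ) * ((a k : ℂ) * b j k) := by
          intro k
          simp only [hgl, hgc, hu]
          simp only [Complex.conj_ofReal]
          push_cast
          ring
        rw [Finset.sum_congr rfl (fun k _ => this k), ← Finset.mul_sum, hbv, mul_zero]
    | cast i =>
      induction j using Fin.lastCases with
      | last =>
        rw [if_neg (by exact (Fin.castSucc_lt_last i).ne)]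
        have : ∀ k, (starRingEnd ℂ) (g (Fin.castSucc i) k) * g (Fin.last d) k
            = (c:ℂ) * (starRingEnd ℂ) ((a k : ℂ) * b i k) := by
          intro k
          simp only [hgl, hgc, hu]
          simp only [_root_.map_mul, Complex.conj_ofReal]
          push_cast
          ring
        rw [Finset.sum_congr rfl (fun k _ => this k), ← Finset.mul_sum, ← map_sum, hbv,
          map_zero, mul_zero]
      | cast j =>
        have : ∀ k, (starRingEnd ℂ) (g (Fin.castSucc i) k) * g (Fin.castSucc j) k
            = (starRingEnd ℂ) (b i k) * b j k := by
          intro k; simp only [hgc]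
        rw [Finset.sum_congr rfl (fun k _ => this k), horm]
        simp [Fin.castSucc_inj]
  set A : Matrix (Fin (d+1)) (Fin (d+1)) ℂ := Matrix.diagonal (fun i => (lam i : ℂ)) with hA
  set N : Matrix (Fin (d+1)) (Fin (d+1)) ℂ := star U * A * U with hN
  have hNentry : ∀ i' j', N i' j'
      = ∑ l, (starRingEnd ℂ) (g i' l) * (lam l : ℂ) * g j' l := by
    intro i' j'
    rw [hN, Matrix.mul_apply]
    refine Finset.sum_congr rfl fun l _ => ?_
    rw [Matrix.mul_diagonal, Matrix.star_apply, hUdef]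
    rfl
  have hB : compressionMatrix A b = N.submatrix Fin.castSucc Fin.castSucc := by
    ext i j
    rw [Matrix.submatrix_apply, hNentry]
    show (inner ℂ (b i) (Matrix.toEuclideanLin A (b j)) : ℂ) = _
    rw [hinner]
    refine Finset.sum_congr rfl fun k _ => ?_
    have hcoord : (Matrix.toEuclideanLin A (b j)) k = (lam k : ℂ) * b j k := by
      rw [Matrix.toEuclideanLin_apply]
      show A.mulVec (fun l => b j l) k = _
      rw [hA, Matrix.mulVec_diagonal]
    rw [hcoord]
    simp only [hgc]
    ring
  have hAH : A.IsHermitian := by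
    apply Matrix.isHermitian_diagonal_of_self_adjoint
    funext i
    exact Complex.conj_ofReal _
  have hNH : N.IsHermitian := by
    show Nᴴ = N
    rw [hN, Matrix.conjTranspose_mul, Matrix.conjTranspose_mul, hAH.eq]
    rw [show (star U)ᴴ = U from Matrix.conjTranspose_conjTranspose U]
    rw [show Uᴴ = star U from rfl, Matrix.mul_assoc]
  have hBH : (compressionMatrix A b).IsHermitian := by
    show (compressionMatrix A b)ᴴ = _
    rw [hB, Matrix.conjTranspose_submatrix, hNH.eq]
  refine ⟨hBH, fun k hk1 hkm => ?_⟩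
  -- determinant facts
  have hUU' : U * star U = 1 := mul_eq_one_comm.mp hUU
  have hdet : U.det * (star U).det = 1 := by
    rw [← Matrix.det_mul, hUU', Matrix.det_one]
  have adjU : U.adjugate = U.det • star U := adjugate_of_unitary U hUU
  have adjsU : (star U).adjugate = (star U).det • U := by
    have h := adjugate_of_unitary (star U) (by rw [star_star]; exact hUU')
    rwa [star_star] at h
  have hadjUC : (U.map C).adjugate = (U.adjugate).map C := by
    have h := (C : ℂ →+* ℂ[X]).map_adjugate U
    simp only [RingHom.mapMatrix_apply] at h
    exact h.symm
  have hadjsUC : ((star U).map C).adjugate = ((star U).adjugate).map C := by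
    have h := (C : ℂ →+* ℂ[X]).map_adjugate (star U)
    simp only [RingHom.mapMatrix_apply] at h
    exact h.symm
  set w : Fin (d+1) → ℂ[X] := fun i => (X : ℂ[X]) - C (lam i : ℂ) with hw
  set w' : Fin (d+1) → ℂ[X] := fun i => ∏ j ∈ Finset.univ.erase i, w j with hw'
  have adjcmA : (Matrix.charmatrix A).adjugate = Matrix.diagonal w' := by
    rw [hA, Stmt4Aux.charmatrix_diagonal, Matrix.adjugate_diagonal]
  have hcmN : Matrix.charmatrix N = (star U).map C * Matrix.charmatrix A * U.map C := by
    rw [hN]; exact charmatrix_conj U A hUU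
  have key : (Matrix.charmatrix N).adjugate (Fin.last d) (Fin.last d)
      = C ((((d:ℝ)+1)⁻¹ : ℝ) : ℂ) * ∑ i, w' i := by
    rw [hcmN, Matrix.adjugate_mul_distrib, Matrix.adjugate_mul_distrib, hadjUC, hadjsUC,
      adjU, adjsU, adjcmA, Matrix.mul_apply, Finset.mul_sum]
    refine Finset.sum_congr rfl fun i _ => ?_
    rw [Matrix.diagonal_mul]
    have hM1 : ((U.det • star U).map C) (Fin.last d) i
        = C (U.det * (starRingEnd ℂ) (U i (Fin.last d))) := by
      simp [Matrix.map_apply, Matrix.smul_apply, Matrix.star_apply, smul_eq_mul]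
    have hM2 : (((star U).det • U).map C) i (Fin.last d)
        = C ((star U).det * U i (Fin.last d)) := by
      simp [Matrix.map_apply, Matrix.smul_apply, smul_eq_mul]
    rw [hM1, hM2]
    have hUil : U i (Fin.last d) = u i := by rw [hUdef]; exact hgl i
    rw [hUil]
    have hval : (U.det * (starRingEnd ℂ) (u i)) * ((star U).det * u i)
        = ((((d:ℝ)+1)⁻¹ : ℝ) : ℂ) := by
      calc (U.det * (starRingEnd ℂ) (u i)) * ((star U).det * u i)
          = (U.det * (star U).det) * ((starRingEnd ℂ) (u i) * u i) := by ring
        _ = ((((d:ℝ)+1)⁻¹ : ℝ) : ℂ) := by rw [hdet, hcu i, one_mul]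
    calc C (U.det * (starRingEnd ℂ) (u i)) * (w' i * C ((star U).det * u i))
        = C ((U.det * (starRingEnd ℂ) (u i)) * ((star U).det * u i)) * w' i := by
          simp only [_root_.map_mul]; ring
      _ = C ((((d:ℝ)+1)⁻¹ : ℝ) : ℂ) * w' i := by rw [hval]
  have hcp : (compressionMatrix A b).charpoly
      = C ((((d:ℝ)+1)⁻¹ : ℝ) : ℂ) * ∑ i, w' i := by
    rw [Matrix.charpoly, hB, ← charmatrix_submatrix, ← adjugate_last_last, key]
  have hcp2 : (compressionMatrix A b).charpoly
      = ∏ i : Fin d, ((X:ℂ[X]) - C (hBH.eigenvalues i : ℂ)) :=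
    hermitian_charpoly _ hBH
  have hder : (∑ i, w' i) = Polynomial.derivative (∏ i, w i) := by
    rw [derivative_prod_fin]
    refine (Finset.sum_congr rfl fun i _ => ?_).symm
    have h1 : Polynomial.derivative (w i) = 1 := by
      rw [hw]; simp
    rw [h1, mul_one, hw']
  have hkd : k ≤ d := by omega
  have hco := congrArg (fun q => Polynomial.coeff q (d - k)) (hcp2.symm.trans hcp)
  rw [prod_X_sub_C_coeff_fin _ hkd, ← ofReal_esymmFin, Polynomial.coeff_C_mul, hder,
    Polynomial.coeff_derivative, hw] at hco
  simp only [] at hco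
  rw [show d - k + 1 = (d+1) - k from by omega,
    prod_X_sub_C_coeff_fin (fun i => ((lam i : ℝ) : ℂ)) (show k ≤ d + 1 by omega),
    ← ofReal_esymmFin] at hco
  -- now hco is an equation between real casts
  set E1 : ℝ := esymmFin k hBH.eigenvalues with hE1
  set E2 : ℝ := esymmFin k lam with hE2
  have h2 : (((-1:ℝ)^k * E1 : ℝ) : ℂ)
      = ((((d:ℝ)+1)⁻¹ * ((-1:ℝ)^k * E2 * (((d - k : ℕ) : ℝ) + 1)) : ℝ) : ℂ) := by
    push_cast at hco ⊢
    linear_combination hco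
  have h3 : (-1:ℝ)^k * E1 = ((d:ℝ)+1)⁻¹ * ((-1:ℝ)^k * E2 * (((d - k : ℕ) : ℝ) + 1)) :=
    Complex.ofReal_inj.mp h2
  have hne : ((-1:ℝ))^k ≠ 0 := pow_ne_zero _ (by norm_num)
  have hE : E1 = ((d:ℝ)+1)⁻¹ * (E2 * (((d - k : ℕ) : ℝ) + 1)) := by
    apply mul_left_cancel₀ hne
    rw [h3]; ring
  rw [hE]
  have hE2pos : 0 < E2 := hpos k hk1 hkm
  have : (0:ℝ) < ((d - k : ℕ) : ℝ) + 1 := by positivity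
  exact mul_pos (inv_pos.mpr hd1pos) (mul_pos hE2pos this)
end
end

section
/- Let 1 ≤ m ≤ n and let A be an n×n Hermitian matrix that is m-positive. Then there exists a complex linear subspace V ⊆ ℂ^n with dim_ℂ V = m such that the compression of A to V is positive definite. -/
open Finset
open scoped ComplexOrder

noncomputable section

/- ### Auxiliary lemmas -/

lemma aux_esymm_cons (a : ℝ) (s : Multiset ℝ) (k : ℕ) :
    (a ::ₘ s).esymm (k + 1) = s.esymm (k + 1) + a * s.esymm k := by
  simp only [Multiset.esymm, Multiset.powersetCard_cons, Multiset.map_add, Multiset.sum_add,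
    Multiset.map_map]
  congr 1
  rw [← Multiset.sum_map_mul_left]
  apply congrArg
  apply Multiset.map_congr rfl
  intro t _
  simp [Multiset.prod_cons]

lemma aux_key_lemma : ∀ (N : ℕ) (s : Multiset ℝ), Multiset.card s ≤ N →
    ∀ m : ℕ, (∀ k, 1 ≤ k → k ≤ m → 0 < s.esymm k) →
    m ≤ Multiset.card (s.filter (fun x => 0 < x)) := by
  intro N
  induction N with
  | zero =>
    intro s hs m h
    rcases Nat.eq_zero_or_pos m with hm | hm
    · omega
    · have := h m hm le_rfl
      by_contra _
      have hcard : Multiset.card s < m := by omega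
      rw [Multiset.esymm, Multiset.powersetCard_eq_empty m hcard] at this
      simp at this
  | succ N ih =>
    intro s hs m h
    rcases Nat.eq_zero_or_pos m with hm | hm
    · omega
    by_cases hall : ∀ x ∈ s, 0 < x
    · have hfe : s.filter (fun x => 0 < x) = s := Multiset.filter_eq_self.2 hall
      rw [hfe]
      by_contra hc
      have hcard : Multiset.card s < m := by omega
      have := h m hm le_rfl
      rw [Multiset.esymm, Multiset.powersetCard_eq_empty m hcard] at this
      simp at this
    · push_neg at hall
      obtain ⟨a, ha, ha0⟩ := hall
      set t := s.erase a with ht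
      have hst : s = a ::ₘ t := (Multiset.cons_erase ha).symm
      have hcardt : Multiset.card t ≤ N := by
        have : Multiset.card s = Multiset.card t + 1 := by rw [hst]; simp
        omega
      have hkey : ∀ k, k ≤ m → 0 < t.esymm k := by
        intro k
        induction k with
        | zero => intro _; simp [Multiset.esymm]
        | succ k ihk =>
          intro hk
          have h1 : 0 < s.esymm (k + 1) := h (k + 1) (by omega) hk
          have h2 : 0 < t.esymm k := ihk (by omega)
          rw [hst, aux_esymm_cons] at h1
          nlinarith
      have := ih t hcardt m (fun k _ hk => hkey k hk)
      calc m ≤ Multiset.card (t.filter (fun x => 0 < x)) := this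
        _ = Multiset.card (s.filter (fun x => 0 < x)) := by
            rw [hst, Multiset.filter_cons_of_neg _ (not_lt.2 ha0)]

lemma aux_exists_pos_finset {n m : ℕ} (lam : Fin n → ℝ)
    (h : ∀ k, 1 ≤ k → k ≤ m → 0 < esymmFin k lam) :
    ∃ S : Finset (Fin n), S.card = m ∧ ∀ i ∈ S, 0 < lam i := by
  have h1 : ∀ k, 1 ≤ k → k ≤ m → 0 < (Finset.univ.val.map lam).esymm k := by
    intro k h1k hkm
    rw [Finset.esymm_map_val]
    exact h k h1k hkm
  have h2 := aux_key_lemma n (Finset.univ.val.map lam) (by simp) m h1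
  rw [Multiset.filter_map] at h2
  rw [Multiset.card_map] at h2
  have h3 : m ≤ (Finset.univ.filter (fun i => 0 < lam i)).card := by
    rw [Finset.card_def, Finset.filter_val]
    refine h2.trans (le_of_eq ?_)
    congr 1
  obtain ⟨S, hS, hcard⟩ := Finset.exists_subset_card_eq h3
  exact ⟨S, hcard, fun i hi => (Finset.mem_filter.1 (hS hi)).2⟩

lemma aux_toEuclideanLin_eigen {n : ℕ} {A : Matrix (Fin n) (Fin n) ℂ} (hA' : A.IsHermitian)
    (j : Fin n) :
    Matrix.toEuclideanLin A (hA'.eigenvectorBasis j) =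
      (hA'.eigenvalues j : ℂ) • hA'.eigenvectorBasis j := by
  have h := hA'.mulVec_eigenvectorBasis j
  ext i
  have := congrFun h i
  simp only [Matrix.toEuclideanLin_apply]
  simpa [Complex.real_smul] using this

lemma aux_quad_expand {n m : ℕ} {A : Matrix (Fin n) (Fin n) ℂ} (hA' : A.IsHermitian)
    (e : Fin m → Fin n) (g : Fin m → EuclideanSpace ℂ (Fin n))
    (hg : Orthonormal ℂ g) (hge : ∀ j, g j = hA'.eigenvectorBasis (e j))
    (c : Fin m → ℂ) :
    (inner ℂ (∑ j, c j • g j) (Matrix.toEuclideanLin A (∑ j, c j • g j)) : ℂ)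
      = ∑ j, (hA'.eigenvalues (e j) * Complex.normSq (c j) : ℝ) := by
  rw [map_sum]
  have h1 : ∀ j, Matrix.toEuclideanLin A (c j • g j)
      = (c j * (hA'.eigenvalues (e j) : ℂ)) • g j := by
    intro j
    rw [map_smul, hge j, aux_toEuclideanLin_eigen, ← hge j, smul_smul]
  simp only [h1, inner_sum, inner_smul_right, hg.inner_left_fintype]
  rw [Complex.ofReal_sum]
  apply Finset.sum_congr rfl
  intro j _
  push_cast [Complex.normSq_eq_conj_mul_self]
  ring

lemma aux_esymmFin_pos {d : ℕ} (k : ℕ) (lam : Fin d → ℝ) (hpos : ∀ i, 0 < lam i)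
    (hkd : k ≤ d) : 0 < esymmFin k lam := by
  apply Finset.sum_pos
  · intro s _
    exact Finset.prod_pos (fun i _ => hpos i)
  · exact Finset.powersetCard_nonempty.2 (by simpa using hkd)

lemma aux_dot_eq_inner {n d : ℕ} (A : Matrix (Fin n) (Fin n) ℂ)
    (b : Fin d → EuclideanSpace ℂ (Fin n)) (x : Fin d → ℂ) :
    dotProduct (star x) (Matrix.mulVec (compressionMatrix A b) x)
      = inner ℂ (∑ i, x i • b i) (Matrix.toEuclideanLin A (∑ i, x i • b i)) := by
  rw [map_sum]
  simp only [dotProduct, Matrix.mulVec, compressionMatrix, sum_inner, inner_sum,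
    inner_smul_left, inner_smul_right, Pi.star_apply, dotProduct, Finset.mul_sum,
    map_sum, map_smul]
  rw [Finset.sum_comm]
  apply Finset.sum_congr rfl
  intro i _
  apply Finset.sum_congr rfl
  intro j _
  rw [RCLike.star_def]
  ring

/-- Remark 2.3. -/
theorem stmt5 (n m : ℕ) (hm : 1 ≤ m) (hmn : m ≤ n)
    (A : Matrix (Fin n) (Fin n) ℂ) (hA : MPositive m A) :
    ∃ V : Submodule ℂ (EuclideanSpace ℂ (Fin n)), Module.finrank ℂ V = m ∧
      CompressionMPositive m A V ∧
      ∀ x : EuclideanSpace ℂ (Fin n), x ∈ V → x ≠ 0 →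
        0 < (inner ℂ x (Matrix.toEuclideanLin A x) : ℂ).re := by
  obtain ⟨hA', hpos⟩ := hA
  obtain ⟨S, hScard, hSpos⟩ := aux_exists_pos_finset hA'.eigenvalues hpos
  set e : Fin m → Fin n := fun j => (S.orderIsoOfFin hScard j : Fin n) with he
  have he_inj : Function.Injective e :=
    Subtype.val_injective.comp (S.orderIsoOfFin hScard).injective
  have he_mem : ∀ j, e j ∈ S := fun j => (S.orderIsoOfFin hScard j).2
  set g : Fin m → EuclideanSpace ℂ (Fin n) := fun j => hA'.eigenvectorBasis (e j) with hg_def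
  have hg : Orthonormal ℂ g := (hA'.eigenvectorBasis.orthonormal).comp e he_inj
  set V : Submodule ℂ (EuclideanSpace ℂ (Fin n)) := Submodule.span ℂ (Set.range g) with hV
  have hrank : Module.finrank ℂ V = m := by
    rw [hV, finrank_span_eq_card hg.linearIndependent, Fintype.card_fin]
  -- positivity of the quadratic form on V
  have hquad : ∀ x : EuclideanSpace ℂ (Fin n), x ∈ V → x ≠ 0 →
      0 < (inner ℂ x (Matrix.toEuclideanLin A x) : ℂ).re := by
    intro x hx hx0
    rw [hV, Submodule.mem_span_range_iff_exists_fun] at hx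
    obtain ⟨c, hc⟩ := hx
    have hc0 : ∃ j, c j ≠ 0 := by
      by_contra hc0
      push_neg at hc0
      apply hx0
      rw [← hc]
      simp [hc0]
    obtain ⟨j0, hj0⟩ := hc0
    rw [← hc, aux_quad_expand hA' e g hg (fun j => rfl) c, Complex.ofReal_re]
    apply Finset.sum_pos'
    · intro j _
      exact mul_nonneg (le_of_lt (hSpos _ (he_mem j))) (Complex.normSq_nonneg _)
    · exact ⟨j0, Finset.mem_univ _, mul_pos (hSpos _ (he_mem j0))
        (Complex.normSq_pos.2 hj0)⟩
  refine ⟨V, hrank, ?_, hquad⟩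
  -- the compression is m-positive
  intro d b hb hbV hbspan
  have hd : d = m := by
    rw [← Fintype.card_fin d, ← finrank_span_eq_card hb.linearIndependent, hbspan, hrank]
  set B := compressionMatrix A b with hB
  have hsym := Matrix.isHermitian_iff_isSymmetric.1 hA'
  have hBherm : B.IsHermitian := by
    apply Matrix.ext
    intro i j
    show star (B j i) = B i j
    rw [hB]
    show star (inner ℂ (b j) (Matrix.toEuclideanLin A (b i)) : ℂ) = _
    rw [RCLike.star_def, inner_conj_symm, hsym (b i) (b j)]
    rfl
  have hBpd : B.PosDef := by
    refine Matrix.posDef_iff_dotProduct_mulVec.2 ⟨hBherm, ?_⟩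
    intro x hx0
    rw [hB, aux_dot_eq_inner A b x]
    set v := ∑ i, x i • b i with hv
    have hvV : v ∈ V := by
      apply Submodule.sum_mem
      intro i _
      exact Submodule.smul_mem _ _ (hbV i)
    have hv0 : v ≠ 0 := by
      intro hv0
      apply hx0
      have := Fintype.linearIndependent_iff.1 hb.linearIndependent x (by rw [← hv, hv0])
      funext i
      exact this i
    have hre := hquad v hvV hv0
    have him : (inner ℂ v (Matrix.toEuclideanLin A v) : ℂ).im = 0 := by
      have hreal : (starRingEnd ℂ) (inner ℂ v (Matrix.toEuclideanLin A v) : ℂ)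
          = inner ℂ v (Matrix.toEuclideanLin A v) := by
        rw [inner_conj_symm, hsym v v]
      have := Complex.conj_eq_iff_im.1 hreal
      exact this
    rw [Complex.lt_def]
    constructor
    · simpa using hre
    · simpa using him.symm
  refine ⟨hBherm, ?_⟩
  intro k hk1 hkm
  apply aux_esymmFin_pos k _ (fun i => hBpd.eigenvalues_pos i)
  omega

end
end

section
/- Let n ≥ 1 and let 0 ≤ k < n be integers. Let f be an alternating ℝ-multilinear map from (ℂ^n)^k to ℂ, where ℂ^n is regarded as a real vector space. Suppose that for every j ∈ {1, ..., n}, f vanishes whenever all of its k arguments lie in the complex coordinate hyperplane H_j = {z ∈ ℂ^n : z_j = 0}. Then f = 0. -/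
open Finset
open scoped ComplexOrder

noncomputable section

/-- end of Lemma 3.3: an alternating `ℝ`-multilinear map
`f : (ℂ^n)^k → ℂ` (with `k < n`) which vanishes whenever all its arguments lie in a single
complex coordinate hyperplane `H_j = {z : z j = 0}` must be zero. -/
theorem stmt7 (n k : ℕ) (hn : 1 ≤ n) (hk : k < n)
    (f : AlternatingMap ℝ (Fin n → ℂ) ℂ (Fin k))
    (hf : ∀ j : Fin n, ∀ v : Fin k → (Fin n → ℂ), (∀ i, v i j = 0) → f v = 0) :
    f = 0 := by
  have : f.toMultilinearMap = (0 : AlternatingMap ℝ (Fin n → ℂ) ℂ (Fin k)).toMultilinearMap := by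
    apply Module.Basis.ext_multilinear (fun _ => Pi.basis (fun _ : Fin n => Complex.basisOneI))
    intro v
    -- find a coordinate j not used by v
    have hcard : (Finset.univ.image fun i : Fin k => (v i).1).card < n := by
      calc (Finset.univ.image fun i : Fin k => (v i).1).card
          ≤ (Finset.univ : Finset (Fin k)).card := Finset.card_image_le
        _ = k := by simp
        _ < n := hk
    obtain ⟨j, hj⟩ : ∃ j : Fin n, j ∉ Finset.univ.image fun i : Fin k => (v i).1 := by
      by_contra h
      push_neg at h
      have : (Finset.univ : Finset (Fin n)) ⊆ Finset.univ.image fun i : Fin k => (v i).1 :=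
        fun x _ => h x
      have := Finset.card_le_card this
      simp at this
      omega
    have h0 : (f.toMultilinearMap) (fun i => Pi.basis (fun _ : Fin n => Complex.basisOneI) (v i)) = 0 := by
      apply hf j
      intro i
      rw [Pi.basis_apply]
      have hne : (v i).1 ≠ j := by
        intro h
        exact hj (Finset.mem_image.mpr ⟨i, Finset.mem_univ i, h⟩)
      exact Pi.single_eq_of_ne (Ne.symm hne) _
    simpa using h0
  exact AlternatingMap.coe_multilinearMap_injective this
end
end

section
/- Let 1 ≤ m ≤ n−1 and let A_1, ..., A_r be n×n Hermitian matrices, each of which is m-positive and positive semidefinite. Then there exists an orthonormal basis (e_1, ..., e_n) of ℂ^n (with respect to the standard Hermitian inner product) such that for every i ∈ {1, ..., r} and every j ∈ {1, ..., n}, the compression of A_i to the hyperplane e_j^⊥ is m-positive as a Hermitian endomorphism of e_j^⊥. -/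
open Finset
open scoped ComplexOrder

noncomputable section

section AuxEsymm

lemma esymm_pos_of_card {N : ℕ} (lam : Fin N → ℝ) (h0 : ∀ i, 0 ≤ lam i) {k : ℕ}
    (hcard : k ≤ (Finset.univ.filter fun i => lam i ≠ 0).card) :
    0 < esymmFin k lam := by
  classical
  obtain ⟨S, hS, hScard⟩ := Finset.exists_subset_card_eq hcard
  refine Finset.sum_pos' (fun s _ => Finset.prod_nonneg fun i _ => h0 i) ⟨S, ?_, ?_⟩
  · simpa [Finset.mem_powersetCard_univ] using hScard
  · exact Finset.prod_pos fun i hi =>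
      lt_of_le_of_ne (h0 i) (Ne.symm (Finset.mem_filter.mp (hS hi)).2)

lemma card_ge_of_esymm_pos {N m : ℕ} (lam : Fin N → ℝ) (hpos : 0 < esymmFin m lam) :
    m ≤ (Finset.univ.filter fun i => lam i ≠ 0).card := by
  classical
  by_contra h
  push_neg at h
  have : esymmFin m lam = 0 := by
    refine Finset.sum_eq_zero fun s hs => ?_
    rw [Finset.mem_powersetCard_univ] at hs
    by_contra hprod
    have hsub : s ⊆ Finset.univ.filter fun i => lam i ≠ 0 := by
      intro i hi
      refine Finset.mem_filter.mpr ⟨Finset.mem_univ i, fun h0 => hprod ?_⟩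
      exact Finset.prod_eq_zero hi h0
    have := Finset.card_le_card hsub
    omega
  simp [this] at hpos

lemma mpositive_of_posSemidef_rank {d m : ℕ} {M : Matrix (Fin d) (Fin d) ℂ}
    (hpsd : M.PosSemidef) (hrank : m ≤ M.rank) : MPositive m M := by
  classical
  refine ⟨hpsd.1, fun k hk1 hkm => esymm_pos_of_card _ (fun i => hpsd.eigenvalues_nonneg i) ?_⟩
  have hcard := hpsd.1.rank_eq_card_non_zero_eigs
  rw [Fintype.card_subtype] at hcard
  omega

lemma rank_ge_of_mpositive {d m : ℕ} {M : Matrix (Fin d) (Fin d) ℂ}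
    (h : MPositive m M) : m ≤ M.rank := by
  classical
  obtain ⟨hM, hpos⟩ := h
  rcases Nat.eq_zero_or_pos m with rfl | hm
  · exact Nat.zero_le _
  have := card_ge_of_esymm_pos _ (hpos m hm le_rfl)
  have hcard := hM.rank_eq_card_non_zero_eigs
  rw [Fintype.card_subtype] at hcard
  omega

end AuxEsymm

section AuxCompression

open Matrix
open scoped InnerProductSpace

lemma compression_isHermitian {n d : ℕ} {A : Matrix (Fin n) (Fin n) ℂ} (hA : A.IsHermitian)
    (b : Fin d → EuclideanSpace ℂ (Fin n)) : (compressionMatrix A b).IsHermitian := by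
  have hsym := Matrix.isHermitian_iff_isSymmetric.mp hA
  have : (compressionMatrix A b)ᴴ = compressionMatrix A b := by
    ext i j
    rw [Matrix.conjTranspose_apply, compressionMatrix, compressionMatrix]
    calc star ⟪b j, Matrix.toEuclideanLin A (b i)⟫_ℂ
        = ⟪Matrix.toEuclideanLin A (b i), b j⟫_ℂ := inner_conj_symm _ _
      _ = ⟪b i, Matrix.toEuclideanLin A (b j)⟫_ℂ := hsym _ _
  exact this

lemma compression_mulVec {n d : ℕ} (A : Matrix (Fin n) (Fin n) ℂ)
    (b : Fin d → EuclideanSpace ℂ (Fin n)) (x : Fin d → ℂ) (i : Fin d) :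
    (compressionMatrix A b).mulVec x i
      = ⟪b i, Matrix.toEuclideanLin A (Fintype.linearCombination ℂ b x)⟫_ℂ := by
  rw [Fintype.linearCombination_apply ℂ b x, map_sum]
  simp only [Matrix.mulVec, dotProduct, compressionMatrix, inner_sum, _root_.map_smul,
    inner_smul_right]
  exact Finset.sum_congr rfl fun j _ => mul_comm _ _

lemma compression_dot {n d : ℕ} (A : Matrix (Fin n) (Fin n) ℂ)
    (b : Fin d → EuclideanSpace ℂ (Fin n)) (x : Fin d → ℂ) :
    dotProduct (star x) ((compressionMatrix A b).mulVec x)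
      = ⟪Fintype.linearCombination ℂ b x,
          Matrix.toEuclideanLin A (Fintype.linearCombination ℂ b x)⟫_ℂ := by
  calc dotProduct (star x) ((compressionMatrix A b).mulVec x)
      = ∑ i, (starRingEnd ℂ) (x i) *
          ⟪b i, Matrix.toEuclideanLin A (Fintype.linearCombination ℂ b x)⟫_ℂ := by
        simp only [dotProduct, Pi.star_apply, compression_mulVec]; rfl
    _ = ⟪∑ i, x i • b i, Matrix.toEuclideanLin A (Fintype.linearCombination ℂ b x)⟫_ℂ := by
        rw [sum_inner]; simp only [inner_smul_left]
    _ = _ := by rw [Fintype.linearCombination_apply ℂ b x]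

lemma compression_posSemidef {n d : ℕ} {A : Matrix (Fin n) (Fin n) ℂ} (hA : A.PosSemidef)
    (b : Fin d → EuclideanSpace ℂ (Fin n)) : (compressionMatrix A b).PosSemidef := by
  refine .of_dotProduct_mulVec_nonneg (compression_isHermitian hA.1 b) fun x => ?_
  rw [compression_dot, EuclideanSpace.inner_eq_star_dotProduct, dotProduct_comm]
  exact hA.dotProduct_mulVec_nonneg _

lemma toEuclideanLin_eq_zero_of_inner {n : ℕ} {A : Matrix (Fin n) (Fin n) ℂ}
    (hA : A.PosSemidef) (v : EuclideanSpace ℂ (Fin n))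
    (h : ⟪v, Matrix.toEuclideanLin A v⟫_ℂ = 0) :
    Matrix.toEuclideanLin A v = 0 := by
  rw [EuclideanSpace.inner_eq_star_dotProduct, dotProduct_comm] at h
  have := (hA.dotProduct_mulVec_zero_iff (WithLp.ofLp v)).mp h
  rw [Matrix.toEuclideanLin_apply, this]
  rfl

lemma ker_compression {n d : ℕ} {A : Matrix (Fin n) (Fin n) ℂ} (hA : A.PosSemidef)
    (b : Fin d → EuclideanSpace ℂ (Fin n)) :
    LinearMap.ker (compressionMatrix A b).mulVecLin
      = Submodule.comap (Fintype.linearCombination ℂ b)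
          (LinearMap.ker (Matrix.toEuclideanLin A)) := by
  ext x
  simp only [LinearMap.mem_ker, Submodule.mem_comap, Matrix.mulVecLin_apply]
  constructor
  · intro hx
    have h0 : dotProduct (star x) ((compressionMatrix A b).mulVec x) = 0 := by
      rw [hx]; simp
    rw [compression_dot] at h0
    exact toEuclideanLin_eq_zero_of_inner hA _ h0
  · intro hx
    funext i
    rw [compression_mulVec, hx, inner_zero_right]
    rfl

lemma finrank_ker_toEuclideanLin {n : ℕ} (A : Matrix (Fin n) (Fin n) ℂ) :
    Module.finrank ℂ (LinearMap.ker (Matrix.toEuclideanLin A))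
      = Module.finrank ℂ (LinearMap.ker A.mulVecLin) := by
  set eL : EuclideanSpace ℂ (Fin n) ≃ₗ[ℂ] (Fin n → ℂ) := WithLp.linearEquiv 2 ℂ (Fin n → ℂ)
  have hmap : Submodule.map (eL : EuclideanSpace ℂ (Fin n) →ₗ[ℂ] (Fin n → ℂ))
      (LinearMap.ker (Matrix.toEuclideanLin A)) = LinearMap.ker A.mulVecLin := by
    ext x
    rw [Submodule.mem_map_equiv]
    simp only [LinearMap.mem_ker, Matrix.mulVecLin_apply]
    constructor
    · intro h
      have h2 := congrArg (WithLp.equiv 2 (Fin n → ℂ)) h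
      simp only [WithLp.equiv_apply, Matrix.piLp_ofLp_toEuclideanLin] at h2
      exact h2
    · intro h
      rw [Matrix.toEuclideanLin_apply]
      simp [eL, h]
  rw [← hmap]
  exact LinearEquiv.finrank_eq (eL.submoduleMap (LinearMap.ker (Matrix.toEuclideanLin A)))

end AuxCompression

section AuxBasis

open Module
open scoped InnerProductSpace

variable {F : Type*} [NormedAddCommGroup F] [InnerProductSpace ℂ F] [FiniteDimensional ℂ F]

omit [FiniteDimensional ℂ F] in
lemma exists_avoid (V : Submodule ℂ F) (W : Finset (Submodule ℂ F))
    (h : ∀ w ∈ W, ¬ V ≤ w) : ∃ v ∈ V, ∀ w ∈ W, v ∉ w := by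
  classical
  set p : {w // w ∈ W} → Subspace ℂ V := fun w => (w : Submodule ℂ F).comap V.subtype with hp
  have hne : ∀ i, p i ≠ ⊤ := by
    rintro ⟨w, hw⟩ ht
    refine h w hw fun x hx => ?_
    have : (⟨x, hx⟩ : V) ∈ p ⟨w, hw⟩ := ht ▸ Submodule.mem_top
    exact this
  have hcov : ⋃ i, (p i : Set V) ≠ Set.univ := by
    intro hc
    obtain ⟨i, hi⟩ := Subspace.exists_eq_top_of_iUnion_eq_univ hc
    exact hne i hi
  obtain ⟨x, hx⟩ := (Set.ne_univ_iff_exists_notMem _).mp hcov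
  exact ⟨x, x.2, fun w hw hxw => hx (Set.mem_iUnion.mpr ⟨⟨w, hw⟩, hxw⟩)⟩

lemma exists_orthonormal_avoiding (W : Finset (Submodule ℂ F)) :
    ∀ (d : ℕ) (V : Submodule ℂ F), finrank ℂ V = d →
    (d ≠ 0 → ∀ w ∈ W, ¬ V ≤ w) →
    ∃ f : Fin d → F, Orthonormal ℂ f ∧ (∀ j, f j ∈ V) ∧
      Submodule.span ℂ (Set.range f) = V ∧ ∀ j, ∀ w ∈ W, f j ∉ w := by
  classical
  intro d
  induction d with
  | zero =>
    intro V hV _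
    refine ⟨Fin.elim0, ⟨fun i => i.elim0, fun i => i.elim0⟩, fun i => i.elim0, ?_, fun i => i.elim0⟩
    rw [Set.range_eq_empty, Submodule.span_empty]
    exact (Submodule.finrank_eq_zero.mp hV).symm
  | succ d IH =>
    intro V hV hW
    have hW' := hW (Nat.succ_ne_zero d)
    have hVbot : V ≠ ⊥ := by
      intro h
      rw [h, finrank_bot] at hV
      omega
    set bad : Finset (Submodule ℂ F) :=
      insert ⊥ (W ∪ (W.filter fun w => V ⊓ w ≠ ⊥).image fun w => V ⊓ (V ⊓ w)ᗮ) with hbaddef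
    have hbad : ∀ w ∈ bad, ¬ V ≤ w := by
      intro w hw
      rcases Finset.mem_insert.mp hw with h1 | h1
      · subst h1; exact fun hle => hVbot (le_bot_iff.mp hle)
      rcases Finset.mem_union.mp h1 with h2 | h2
      · exact hW' w h2
      · obtain ⟨w', hw', rfl⟩ := Finset.mem_image.mp h2
        obtain ⟨hw'W, hw'ne⟩ := Finset.mem_filter.mp hw'
        intro hle
        apply hw'ne
        rw [eq_bot_iff]
        calc V ⊓ w' ≤ (V ⊓ w') ⊓ (V ⊓ w')ᗮ := by
              refine le_inf le_rfl ?_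
              exact le_trans (le_trans inf_le_left hle) inf_le_right
          _ = ⊥ := Submodule.inf_orthogonal_eq_bot _
    obtain ⟨v, hvV, hvavoid⟩ := exists_avoid V bad hbad
    have hv0 : v ≠ 0 := by
      intro h
      exact hvavoid ⊥ (Finset.mem_insert_self _ _) (h ▸ Submodule.zero_mem ⊥)
    set u := (‖v‖⁻¹ : ℂ) • v with hu
    have hnv : (‖v‖ : ℂ) ≠ 0 := by
      simpa using norm_ne_zero_iff.mpr hv0
    have huV : u ∈ V := Submodule.smul_mem _ _ hvV
    have hunorm : ‖u‖ = 1 := norm_smul_inv_norm hv0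
    have hu0 : u ≠ 0 := by
      intro h; rw [h] at hunorm; simp at hunorm
    have huavoid : ∀ w ∈ bad, u ∉ w := by
      intro w hw hmem
      apply hvavoid w hw
      have : (‖v‖ : ℂ) • u ∈ w := Submodule.smul_mem _ _ hmem
      rwa [hu, smul_smul, mul_inv_cancel₀ hnv, one_smul] at this
    set V' := (ℂ ∙ u)ᗮ ⊓ V with hV'def
    have hsup : (ℂ ∙ u) ⊔ V' = V :=
      Submodule.sup_orthogonal_inf_of_hasOrthogonalProjection
        ((Submodule.span_singleton_le_iff_mem u V).mpr huV)
    have hdisj : (ℂ ∙ u) ⊓ V' = ⊥ := by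
      rw [eq_bot_iff]
      calc (ℂ ∙ u) ⊓ V' ≤ (ℂ ∙ u) ⊓ (ℂ ∙ u)ᗮ := inf_le_inf_left _ inf_le_left
        _ = ⊥ := Submodule.inf_orthogonal_eq_bot _
    have hV'rank : finrank ℂ V' = d := by
      have h1 : finrank ℂ (ℂ ∙ u) = 1 := finrank_span_singleton hu0
      have h2 := Submodule.finrank_sup_add_finrank_inf_eq (ℂ ∙ u) V'
      rw [hsup, hdisj, finrank_bot, h1, hV] at h2
      omega
    have hV'le : V' ≤ V := inf_le_right
    have hW'' : d ≠ 0 → ∀ w ∈ W, ¬ V' ≤ w := by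
      intro hd w hw hle
      have hV'inf : V' ≤ V ⊓ w := le_inf hV'le hle
      by_cases hb : V ⊓ w = ⊥
      · rw [hb, le_bot_iff] at hV'inf
        rw [hV'inf, finrank_bot] at hV'rank
        omega
      · have hcmem : (V ⊓ (V ⊓ w)ᗮ) ∈ bad := by
          refine Finset.mem_insert.mpr (Or.inr (Finset.mem_union.mpr (Or.inr ?_)))
          exact Finset.mem_image.mpr ⟨w, Finset.mem_filter.mpr ⟨hw, hb⟩, rfl⟩
        have hu2 : u ∉ (V ⊓ w)ᗮ := fun h => huavoid _ hcmem ⟨huV, h⟩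
        have huw : u ∉ w := huavoid w (Finset.mem_insert.mpr
          (Or.inr (Finset.mem_union.mpr (Or.inl hw))))
        have hlt : V ⊓ w < V := lt_of_le_of_ne inf_le_left fun he => by
          have : u ∈ V ⊓ w := he.symm ▸ huV
          exact huw this.2
        have hr2 : d ≤ finrank ℂ ↥(V ⊓ w) := hV'rank ▸ Submodule.finrank_mono hV'inf
        have hr1 : finrank ℂ ↥(V ⊓ w) ≤ d := by
          have := Submodule.finrank_lt_finrank_of_lt hlt
          rw [hV] at this
          omega
        have heq : V' = V ⊓ w := Submodule.eq_of_le_of_finrank_le hV'inf (by rw [hV'rank]; omega)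
        apply hu2
        rw [Submodule.mem_orthogonal]
        intro z hz
        have hz' : z ∈ V' := heq ▸ hz
        have h0 : ⟪u, z⟫_ℂ = 0 :=
          (Submodule.mem_orthogonal _ _).mp hz'.1 u (Submodule.mem_span_singleton_self u)
        rw [← inner_conj_symm, h0, map_zero]
    obtain ⟨g, hg, hgV, hgspan, hgavoid⟩ := IH V' hV'rank hW''
    have hWsub : ∀ w ∈ W, w ∈ bad := fun w hw =>
      Finset.mem_insert.mpr (Or.inr (Finset.mem_union.mpr (Or.inl hw)))
    have hgu : ∀ i, ⟪u, g i⟫_ℂ = 0 := fun i =>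
      (Submodule.mem_orthogonal _ _).mp (hgV i).1 u (Submodule.mem_span_singleton_self u)
    refine ⟨Fin.cons u g, ⟨?_, ?_⟩, ?_, ?_, ?_⟩
    · intro i
      rcases Fin.eq_zero_or_eq_succ i with rfl | ⟨i', rfl⟩
      · simpa using hunorm
      · simpa using hg.1 i'
    · intro i j hij
      rcases Fin.eq_zero_or_eq_succ i with rfl | ⟨i', rfl⟩ <;>
        rcases Fin.eq_zero_or_eq_succ j with rfl | ⟨j', rfl⟩
      · exact absurd rfl hij
      · simpa using hgu j'
      · simp only [Fin.cons_zero, Fin.cons_succ]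
        rw [← inner_conj_symm, hgu i', map_zero]
      · simp only [Fin.cons_succ]
        exact hg.2 fun h => hij (by rw [h])
    · intro j
      rcases Fin.eq_zero_or_eq_succ j with rfl | ⟨j', rfl⟩
      · simpa using huV
      · simpa using hV'le (hgV j')
    · rw [Fin.range_cons, Submodule.span_insert, hgspan]
      exact hsup
    · intro j w hw
      rcases Fin.eq_zero_or_eq_succ j with rfl | ⟨j', rfl⟩
      · simpa using huavoid w (hWsub w hw)
      · simpa using hgavoid j' w hw

end AuxBasis

section Main

open Module
open scoped InnerProductSpace

/-- key step in Lemma 3.3: if `A₁, …, A_r` are Hermitian matrices, each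
`m`-positive and positive semidefinite (`1 ≤ m ≤ n - 1`), then there is an orthonormal basis
`e₁, …, e_n` of `ℂ^n` such that each compression of each `A_i` to each hyperplane `e_j^⊥`
is `m`-positive. -/
theorem stmt11 (n m r : ℕ) (hm : 1 ≤ m) (hmn : m < n)
    (A : Fin r → Matrix (Fin n) (Fin n) ℂ)
    (hpsd : ∀ i, (A i).PosSemidef) (hmpos : ∀ i, MPositive m (A i)) :
    ∃ e : OrthonormalBasis (Fin n) ℂ (EuclideanSpace ℂ (Fin n)),
      ∀ (i : Fin r) (j : Fin n), CompressionMPositive m (A i) (ℂ ∙ (e j))ᗮ := by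
  classical
  set K : Fin r → Submodule ℂ (EuclideanSpace ℂ (Fin n)) :=
    fun i => LinearMap.ker (Matrix.toEuclideanLin (A i)) with hK
  set W : Finset (Submodule ℂ (EuclideanSpace ℂ (Fin n))) :=
    (Finset.univ.filter fun i => K i ≠ ⊥).image fun i => (K i)ᗮ with hWdef
  have hfr : finrank ℂ (⊤ : Submodule ℂ (EuclideanSpace ℂ (Fin n))) = n := by
    rw [finrank_top, finrank_euclideanSpace_fin]
  have hWproper : n ≠ 0 → ∀ w ∈ W, ¬ (⊤ : Submodule ℂ (EuclideanSpace ℂ (Fin n))) ≤ w := by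
    intro _ w hw htop
    obtain ⟨i, hi, rfl⟩ := Finset.mem_image.mp hw
    exact (Finset.mem_filter.mp hi).2
      ((Submodule.orthogonal_eq_top_iff _).mp (top_le_iff.mp htop))
  obtain ⟨f, hf, -, hfspan, hfavoid⟩ := exists_orthonormal_avoiding W n ⊤ hfr hWproper
  refine ⟨OrthonormalBasis.mk hf hfspan.ge, ?_⟩
  intro i j
  have hej : (OrthonormalBasis.mk hf hfspan.ge) j = f j := by
    simp [OrthonormalBasis.coe_mk]
  rw [hej]
  -- kernel dimension bound
  have hfj0 : f j ≠ 0 := by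
    intro h
    have := hf.1 j
    rw [h] at this
    simp at this
  set H := (ℂ ∙ f j)ᗮ with hHdef
  have hHrank : finrank ℂ H = n - 1 := by
    have h1 : finrank ℂ (ℂ ∙ f j) = 1 := finrank_span_singleton hfj0
    have h2 := (ℂ ∙ f j).finrank_add_finrank_orthogonal
    rw [h1, finrank_euclideanSpace_fin] at h2
    rw [hHdef]
    omega
  have hKrank : finrank ℂ (K i) ≤ n - m := by
    have h1 : finrank ℂ (K i) = finrank ℂ (LinearMap.ker (A i).mulVecLin) :=
      finrank_ker_toEuclideanLin (A i)
    have h2 := LinearMap.finrank_range_add_finrank_ker (A i).mulVecLin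
    have h3 : finrank ℂ (Fin n → ℂ) = n := by simp [Module.finrank_pi]
    have hrk : m ≤ (A i).rank := rank_ge_of_mpositive (hmpos i)
    rw [h3] at h2
    rw [Matrix.rank] at hrk
    omega
  have hKH : finrank ℂ ↥(H ⊓ K i) ≤ n - 1 - m := by
    by_cases hKb : K i = ⊥
    · rw [hKb, inf_bot_eq]
      rw [finrank_bot]
      omega
    · have hmem : (K i)ᗮ ∈ W := by
        rw [hWdef]
        exact Finset.mem_image.mpr ⟨i, Finset.mem_filter.mpr ⟨Finset.mem_univ i, hKb⟩, rfl⟩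
      have hfjmem : f j ∉ (K i)ᗮ := hfavoid j _ hmem
      have hlt : H ⊓ K i < K i := by
        refine lt_of_le_of_ne inf_le_right fun heq => hfjmem ?_
        have hKle : K i ≤ H := by
          rw [← heq]; exact inf_le_left
        rw [Submodule.mem_orthogonal]
        intro y hy
        have h1 : ⟪f j, y⟫_ℂ = 0 :=
          (Submodule.mem_orthogonal _ _).mp (hKle hy) (f j)
            (Submodule.mem_span_singleton_self _)
        rw [← inner_conj_symm, h1, map_zero]
      have := Submodule.finrank_lt_finrank_of_lt hlt
      omega
  -- conclude
  intro d b hb hbH hbspan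
  have hblin := hb.linearIndependent
  have hdH : finrank ℂ H = d := by
    rw [← hbspan, finrank_span_eq_card hblin, Fintype.card_fin]
  set L := Fintype.linearCombination ℂ b with hLdef
  have hinj : Function.Injective L := by
    rw [← LinearMap.ker_eq_bot]
    rw [Submodule.eq_bot_iff]
    intro x hx
    have := Fintype.linearIndependent_iff.mp hblin x hx
    funext k
    exact this k
  have hrangeL : LinearMap.range L = H := by
    rw [hLdef, Fintype.range_linearCombination ℂ b, hbspan]
  have hkerB : finrank ℂ (LinearMap.ker (compressionMatrix (A i) b).mulVecLin)
      = finrank ℂ ↥(H ⊓ K i) := by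
    rw [ker_compression (hpsd i) b]
    calc finrank ℂ (Submodule.comap L (K i))
        = finrank ℂ (Submodule.map L (Submodule.comap L (K i))) :=
          LinearEquiv.finrank_eq (Submodule.equivMapOfInjective L hinj _)
      _ = finrank ℂ ↥(H ⊓ K i) := by rw [Submodule.map_comap_eq, hrangeL]
  have hrnB := LinearMap.finrank_range_add_finrank_ker (compressionMatrix (A i) b).mulVecLin
  have h3 : finrank ℂ (Fin d → ℂ) = d := by simp [Module.finrank_pi]
  rw [h3, hkerB] at hrnB
  have hrankB : m ≤ (compressionMatrix (A i) b).rank := by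
    rw [Matrix.rank]
    omega
  exact mpositive_of_posSemidef_rank (compression_posSemidef (hpsd i) b) hrankB

end Main
end
end
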